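/- For every coloring f : [ℕ]^{!ω} → ℕ there exists a 2-bounded coloring g of the exactly (ω+1)-large subsets of ℕ into ℕ such that for every infinite set H ⊆ ℕ that is a rainbow for g and all x < y in H, the set H \ [0, y] is thin for f for the color ⟨x, y⟩, where ⟨·,·⟩ is a fixed pairing bijection ℕ × ℕ → ℕ. -/
import Mathlib


/-- A finite set `s ⊆ ℕ` is exactly ω-large if `|s| = 1 + min s`. -/
def ExLarge (s : Finset ℕ) : Prop :=
  s.Nonempty ∧ s.card = 1 + sInf (↑s : Set ℕ)

/-- A finite set `s ⊆ ℕ` is exactly (ω+1)-large if `s \ {min s}` is exactly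
ω-large. -/
def ExLarge1 (s : Finset ℕ) : Prop :=
  s.Nonempty ∧ ExLarge (s.erase (sInf (↑s : Set ℕ)))

/-- `g` is 2-bounded on the exactly (ω+1)-large sets. -/
def TwoBounded1 (g : Finset ℕ → ℕ) : Prop :=
  ∀ c : ℕ, ∃ T : Finset (Finset ℕ), T.card ≤ 2 ∧
    ∀ u : Finset ℕ, ExLarge1 u → g u = c → u ∈ T

/-- `H` is a rainbow for `g`: `g` is injective on the exactly (ω+1)-large
subsets of `H`. -/
def Rainbow1 (g : Finset ℕ → ℕ) (H : Set ℕ) : Prop :=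
  ∀ s t : Finset ℕ, ExLarge1 s → ExLarge1 t → ↑s ⊆ H → ↑t ⊆ H → g s = g t → s = t



open Classical in
/-- Auxiliary coloring. -/
noncomputable def myg (f : Finset ℕ → ℕ) (u : Finset ℕ) : ℕ :=
  if sInf (↑u : Set ℕ) = (Nat.unpair (f (u.erase (sInf (↑u : Set ℕ))))).1 ∨
      sInf (↑u : Set ℕ) = (Nat.unpair (f (u.erase (sInf (↑u : Set ℕ))))).2 then
    2 * Encodable.encode (u.erase (sInf (↑u : Set ℕ)))
  else 2 * Encodable.encode u + 1

noncomputable def mydec (e : ℕ) : Finset ℕ := (Encodable.decode (α := Finset ℕ) e).getD ∅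

lemma mydec_encode (s : Finset ℕ) : mydec (Encodable.encode s) = s := by
  simp [mydec, Encodable.encodek]

lemma ins_inf (a : ℕ) (s : Finset ℕ) (h : ∀ b ∈ s, a < b) :
    sInf (↑(insert a s) : Set ℕ) = a := by
  refine le_antisymm (Nat.sInf_le (by simp)) (le_csInf ⟨a, by simp⟩ ?_)
  intro b hb
  simp only [Finset.coe_insert, Set.mem_insert_iff, Finset.mem_coe] at hb
  rcases hb with rfl | hb
  · exact le_rfl
  · exact (h b hb).le

lemma not_mem_of_lt (a : ℕ) (s : Finset ℕ) (h : ∀ b ∈ s, a < b) : a ∉ s :=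
  fun ha => lt_irrefl a (h a ha)

lemma exlarge1_ins (a : ℕ) (s : Finset ℕ) (h : ∀ b ∈ s, a < b) (hs : ExLarge s) :
    ExLarge1 (insert a s) := by
  refine ⟨Finset.insert_nonempty _ _, ?_⟩
  rw [ins_inf a s h, Finset.erase_insert (not_mem_of_lt a s h)]
  exact hs

/-- for every `f : [ℕ]^{!ω} → ℕ` there is a 2-bounded coloring
`g` of the exactly (ω+1)-large sets such that for every infinite `g`-rainbow
`H` and all `x < y` in `H`, the set `H \ [0, y]` is `f`-thin for the color
`⟨x, y⟩` (with `Nat.pair` as the fixed pairing bijection). -/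
theorem stmt13 (f : Finset ℕ → ℕ) :
    ∃ g : Finset ℕ → ℕ, TwoBounded1 g ∧
      ∀ H : Set ℕ, H.Infinite → Rainbow1 g H →
        ∀ x y : ℕ, x ∈ H → y ∈ H → x < y →
          ∀ s : Finset ℕ, ExLarge s → ↑s ⊆ H \ Set.Iic y → f s ≠ Nat.pair x y := by
  classical
  refine ⟨myg f, ?_, ?_⟩
  · -- 2-bounded
    intro c
    set e := c / 2 with he
    set s₀ := mydec e with hs₀
    set p := Nat.unpair (f s₀) with hp
    refine ⟨if c % 2 = 1 then {mydec e} else {insert p.1 s₀, insert p.2 s₀}, ?_, ?_⟩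
    · split_ifs
      · simp
      · exact le_trans (Finset.card_insert_le _ _) (by simp)
    · intro u hEx hgu
      by_cases hC : sInf (↑u : Set ℕ) = (Nat.unpair (f (u.erase (sInf (↑u : Set ℕ))))).1 ∨
          sInf (↑u : Set ℕ) = (Nat.unpair (f (u.erase (sInf (↑u : Set ℕ))))).2
      · rw [myg, if_pos hC] at hgu
        have hcm : c % 2 = 0 := by omega
        have hee : e = Encodable.encode (u.erase (sInf (↑u : Set ℕ))) := by omega
        have hs : s₀ = u.erase (sInf (↑u : Set ℕ)) := by rw [hs₀, hee, mydec_encode]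
        have ha : sInf (↑u : Set ℕ) ∈ u := by
          have := Nat.sInf_mem (s := (↑u : Set ℕ)) (Finset.coe_nonempty.mpr hEx.1)
          exact_mod_cast this
        have hu : insert (sInf (↑u : Set ℕ)) (u.erase (sInf (↑u : Set ℕ))) = u :=
          Finset.insert_erase ha
        rw [if_neg (by omega : ¬ c % 2 = 1)]
        simp only [Finset.mem_insert, Finset.mem_singleton]
        rcases hC with hC | hC
        · left; rw [← hu, hs]; congr 1; rw [hC, hp, hs]
        · right; rw [← hu, hs]; congr 1; rw [hC, hp, hs]
      · rw [myg, if_neg hC] at hgu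
        have hcm : c % 2 = 1 := by omega
        have hee : e = Encodable.encode u := by omega
        rw [if_pos hcm]
        simp [hee, mydec_encode]
  · -- rainbow property
    intro H hInf hR x y hx hy hxy s hsL hsub hfs
    have hys : ∀ b ∈ s, y < b := by
      intro b hb
      have := hsub (Finset.mem_coe.mpr hb)
      simp only [Set.mem_diff, Set.mem_Iic, not_le] at this
      exact this.2
    have hxs : ∀ b ∈ s, x < b := fun b hb => lt_trans hxy (hys b hb)
    have hsH : (↑s : Set ℕ) ⊆ H := fun b hb => (hsub hb).1
    have h1 : ExLarge1 (insert x s) := exlarge1_ins x s hxs hsL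
    have h2 : ExLarge1 (insert y s) := exlarge1_ins y s hys hsL
    have key : ∀ a, (∀ b ∈ s, a < b) → (a = (Nat.unpair (f s)).1 ∨ a = (Nat.unpair (f s)).2) →
        myg f (insert a s) = 2 * Encodable.encode s := by
      intro a ha hmem
      rw [myg, ins_inf a s ha, Finset.erase_insert (not_mem_of_lt a s ha), if_pos hmem]
    have hg1 : myg f (insert x s) = 2 * Encodable.encode s :=
      key x hxs (by rw [hfs, Nat.unpair_pair]; left; rfl)
    have hg2 : myg f (insert y s) = 2 * Encodable.encode s :=
      key y hys (by rw [hfs, Nat.unpair_pair]; right; rfl)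
    have hsub1 : (↑(insert x s) : Set ℕ) ⊆ H := by
      rw [Finset.coe_insert]; exact Set.insert_subset hx hsH
    have hsub2 : (↑(insert y s) : Set ℕ) ⊆ H := by
      rw [Finset.coe_insert]; exact Set.insert_subset hy hsH
    have heq := hR _ _ h1 h2 hsub1 hsub2 (hg1.trans hg2.symm)
    have : x ∈ insert y s := heq ▸ Finset.mem_insert_self x s
    rcases Finset.mem_insert.mp this with h | h
    · omega
    · exact lt_irrefl x (hxs x h)
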